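/- Let a, b, c, d be rational numbers with a ≠ b such that b^2 - a^2 = d and c^2 - b^2 = d (so {a^2, b^2, c^2} is an arithmetic progression of length 3 with common difference d). Set X = d(c-b)/(a-b) and Y = d^2(2b-a-c)/(a-b)^2. Then Y^2 = X^3 - d^2·X; that is, (X, Y) is a rational point on the elliptic curve E_d : y^2 = x^3 - d^2 x. -/

import Mathlib

/-- If `{a², b², c²}` is an arithmetic progression of length 3 in `ℚ` with common
difference `d` and `a ≠ b`, then the point `(X, Y)` with `X = d(c - b)/(a - b)` and
`Y = d²(2b - a - c)/(a - b)²` is a rational point on the elliptic curve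
`E_d : y² = x³ - d²·x`. -/
theorem point_on_Ed_of_squares_AP (a b c d : ℚ) (hab : a ≠ b)
    (h1 : b ^ 2 - a ^ 2 = d) (h2 : c ^ 2 - b ^ 2 = d)
    (X Y : ℚ)
    (hX : X = d * (c - b) / (a - b))
    (hY : Y = d ^ 2 * (2 * b - a - c) / (a - b) ^ 2) :
    Y ^ 2 = X ^ 3 - d ^ 2 * X := by
  have hab' : a - b ≠ 0 := sub_ne_zero.mpr hab
  subst hX hY h1
  field_simp
  linear_combination (b^2-a^2)^3 * (-(a-b)*c + (b^2-a^2) + 3*b*(a-b)) * h2
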